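/- Let n ≥ 2, k ≥ 1, and let G be a subgroup of S_n. Define the k-closure of G as the set of all σ ∈ S_n such that for every k-ary relation ρ ⊆ ({1,…,n})^k that is invariant under G (i.e., for every π ∈ G and every r = (r₁,…,r_k) ∈ ρ, the tuple (π(r₁),…,π(r_k)) lies in ρ), σ also preserves ρ (i.e., (σ(r₁),…,σ(r_k)) ∈ ρ for every r ∈ ρ). Then the Galois closure of G over k + 1 is contained in the k-closure of G. -/

import Mathlib

/-- `σ ⊢ f`: the permutation `σ` leaves the function `f : ({1,…,k}^Ω) → {1,…,k}` invariant. -/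
def InvariantUnder {Ω : Type*} (k : ℕ) (σ : Equiv.Perm Ω) (f : (Ω → Fin k) → Fin k) : Prop :=
  ∀ x : Ω → Fin k, f x = f (fun i => x (σ i))

/-- The Galois closure over `k` of a subgroup `G` of the symmetric group on `Ω`. -/
def galoisClosure {Ω : Type*} (k : ℕ) (G : Subgroup (Equiv.Perm Ω)) : Set (Equiv.Perm Ω) :=
  {σ | ∀ f : (Ω → Fin k) → Fin k, (∀ π ∈ G, InvariantUnder k π f) → InvariantUnder k σ f}

/-- `G` is Galois closed over `k`. -/
def IsGaloisClosed {Ω : Type*} (k : ℕ) (G : Subgroup (Equiv.Perm Ω)) : Prop :=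
  galoisClosure k G = (G : Set (Equiv.Perm Ω))

/-- The Galois closure of `G ≤ S_n` over `k + 1` is contained in the `k`-closure of `G`,
i.e. in the group of permutations preserving every `G`-invariant `k`-ary relation on
`{1,…,n}`. -/
theorem stmt_19 (n k : ℕ) (hn : 2 ≤ n) (hk : 1 ≤ k) (G : Subgroup (Equiv.Perm (Fin n))) :
    galoisClosure (k + 1) G ⊆
      {σ : Equiv.Perm (Fin n) | ∀ ρ : Set (Fin k → Fin n),
        (∀ π ∈ G, ∀ r ∈ ρ, (fun j => π (r j)) ∈ ρ) →
        ∀ r ∈ ρ, (fun j => σ (r j)) ∈ ρ} := by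
  intro σ hσ ρ hρ r hr
  classical
  -- canonical coloring of the tuple r
  set χ : Fin n → Fin (k + 1) :=
    fun i => if h : ∃ j : Fin k, r j = i then Fin.succ h.choose else 0 with hχ
  set P : (Fin n → Fin (k + 1)) → Prop :=
    fun x => ∃ π ∈ G, x = fun i => χ (π i) with hP
  set f : (Fin n → Fin (k + 1)) → Fin (k + 1) :=
    fun x => if P x then Fin.succ ⟨0, hk⟩ else 0 with hf
  have hinv : ∀ π ∈ G, InvariantUnder (k + 1) π f := by
    intro τ hτ x
    have hiff : P x ↔ P (fun i => x (τ i)) := by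
      constructor
      · rintro ⟨π, hπ, hx⟩
        refine ⟨π * τ, mul_mem hπ hτ, funext fun i => ?_⟩
        simp [hx, Equiv.Perm.mul_apply]
      · rintro ⟨π, hπ, hx⟩
        refine ⟨π * τ⁻¹, mul_mem hπ (inv_mem hτ), funext fun i => ?_⟩
        have := congrFun hx (τ⁻¹ i)
        simpa [Equiv.Perm.mul_apply] using this
    simp only [hf]
    exact if_congr hiff rfl rfl
  have hσf : InvariantUnder (k + 1) σ f := hσ f hinv
  have key := hσf (fun i => χ (σ⁻¹ i))
  have h1 : (fun i => χ (σ⁻¹ (σ i))) = χ := funext fun i => by simp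
  rw [h1] at key
  have hPχ : P χ := ⟨1, one_mem G, funext fun i => by simp⟩
  have hfχ : f χ = Fin.succ ⟨0, hk⟩ := by simp only [hf]; exact if_pos hPχ
  rw [hfχ] at key
  have hPx : P (fun i => χ (σ⁻¹ i)) := by
    by_contra h
    have : f (fun i => χ (σ⁻¹ i)) = 0 := by simp only [hf]; exact if_neg h
    rw [this] at key
    exact (Fin.succ_ne_zero _) key.symm
  obtain ⟨π, hπ, hx⟩ := hPx
  -- extract: σ (r j) = π⁻¹ (r j)
  have hpoint : ∀ j : Fin k, σ (r j) = π⁻¹ (r j) := by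
    intro j
    have hev := congrFun hx (σ (r j))
    rw [Equiv.Perm.inv_eq_iff_eq.mpr (rfl : σ (r j) = σ (r j))] at hev
    have h₁ : ∃ j' : Fin k, r j' = r j := ⟨j, rfl⟩
    have hL : χ (r j) = Fin.succ h₁.choose := by rw [hχ]; exact dif_pos h₁
    rw [hL] at hev
    -- hev : Fin.succ h₁.choose = χ (π (σ (r j)))
    by_cases h₂ : ∃ j' : Fin k, r j' = π (σ (r j))
    · have hR : χ (π (σ (r j))) = Fin.succ h₂.choose := by rw [hχ]; exact dif_pos h₂
      rw [hR] at hev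
      have hcc : h₁.choose = h₂.choose := Fin.succ_injective _ hev
      have e1 : r h₁.choose = r j := h₁.choose_spec
      have e2 : r h₂.choose = π (σ (r j)) := h₂.choose_spec
      have hfin : π (σ (r j)) = r j := by rw [← e2, ← hcc, e1]
      exact π.injective (by rw [Equiv.Perm.eq_inv_iff_eq.mp (rfl : π⁻¹ (r j) = π⁻¹ (r j))]; exact hfin)
    · have hR : χ (π (σ (r j))) = 0 := by rw [hχ]; exact dif_neg h₂
      rw [hR] at hev
      exact absurd hev (Fin.succ_ne_zero _)
  have heq : (fun j => σ (r j)) = fun j => π⁻¹ (r j) := funext hpoint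
  rw [heq]
  exact hρ π⁻¹ (inv_mem hπ) r hr
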